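/- Let A be a GOE Wigner matrix (A random symmetric n×n with independent upper-triangular entries, A_{ij} ~ N(0,1/n) for i<j and A_{ii} ~ N(0,2/n)), let X ∈ P_n be a permutation matrix with permutation x, and set C := A X A. Then E[C_{ii}] = s_x + (1/n)·1_{i ∈ S_X} for every i, and E[C_{ij}] = (1/n)·1_{x(j)=i} for every i ≠ j. Consequently, for all i ≠ j, s_x − 1/n ≤ E[C_{ii}] − E[C_{ij}] ≤ s_x + 1/n. -/

import Mathlib

open MeasureTheory ProbabilityTheory Finset
open scoped NNReal ENNReal

noncomputable section

/-- The permutation matrix of `x`: entry `(k,l)` is 1 iff `x k = l`. -/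
def permMat {n : ℕ} (x : Equiv.Perm (Fin n)) : Matrix (Fin n) (Fin n) ℝ :=
  fun k l => if x k = l then 1 else 0

/-- Entry `(i,j)` of the triple product `A * X * B`. -/
def matProd3 {n : ℕ} (A X B : Matrix (Fin n) (Fin n) ℝ) : Matrix (Fin n) (Fin n) ℝ :=
  fun i j => ∑ k, ∑ l, A i k * X k l * B l j

/-- The set of fixed points of a permutation of `Fin n`. -/
def fixedPts {n : ℕ} (x : Equiv.Perm (Fin n)) : Finset (Fin n) :=
  Finset.univ.filter fun i => x i = i

/-- `π` is a possible output of the greedy maximum weight matching (GMWM) algorithm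
on input `C`: there is an ordering `τ 0, τ 1, …` of the rows such that at each step
the chosen entry `C (τ k) (π (τ k))` is maximal among all entries whose row and column
have not yet been used. -/
def IsGreedyMatching {n : ℕ} (C : Matrix (Fin n) (Fin n) ℝ) (π : Equiv.Perm (Fin n)) : Prop :=
  ∃ τ : Equiv.Perm (Fin n), ∀ k i j : Fin n,
    (∀ k', k' < k → τ k' ≠ i) → (∀ k', k' < k → π (τ k') ≠ j) →
      C i j ≤ C (τ k) (π (τ k))

/-- A GOE Wigner matrix: symmetric, jointly independent upper-triangular entries,
off-diagonal entries `N(0, 1/n)`, diagonal entries `N(0, 2/n)`. -/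
def IsWigner {Ω : Type*} [MeasureSpace Ω] (n : ℕ)
    (A : Ω → Matrix (Fin n) (Fin n) ℝ) : Prop :=
  (∀ ω i j, A ω i j = A ω j i) ∧
  (∀ i j, Measurable fun ω => A ω i j) ∧
  iIndepFun
    (fun (p : {q : Fin n × Fin n // q.1 ≤ q.2}) ω => A ω p.1.1 p.1.2) volume ∧
  (∀ i j : Fin n, i < j →
    Measure.map (fun ω => A ω i j) volume = gaussianReal 0 ((1 : ℝ≥0) / n)) ∧
  (∀ i : Fin n,
    Measure.map (fun ω => A ω i i) volume = gaussianReal 0 ((2 : ℝ≥0) / n))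

/-- A pair of GOE Wigner matrices whose upper-triangular entries are all mutually
independent (i.e. `A` and `Z` are two independent GOE Wigner matrices). -/
def IsWignerPair {Ω : Type*} [MeasureSpace Ω] (n : ℕ)
    (A Z : Ω → Matrix (Fin n) (Fin n) ℝ) : Prop :=
  (∀ ω i j, A ω i j = A ω j i) ∧ (∀ ω i j, Z ω i j = Z ω j i) ∧
  (∀ i j, Measurable fun ω => A ω i j) ∧ (∀ i j, Measurable fun ω => Z ω i j) ∧
  iIndepFun
    (fun (p : Bool × {q : Fin n × Fin n // q.1 ≤ q.2}) ω =>
      if p.1 then A ω p.2.1.1 p.2.1.2 else Z ω p.2.1.1 p.2.1.2) volume ∧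
  (∀ i j : Fin n, i < j →
    Measure.map (fun ω => A ω i j) volume = gaussianReal 0 ((1 : ℝ≥0) / n) ∧
    Measure.map (fun ω => Z ω i j) volume = gaussianReal 0 ((1 : ℝ≥0) / n)) ∧
  (∀ i : Fin n,
    Measure.map (fun ω => A ω i i) volume = gaussianReal 0 ((2 : ℝ≥0) / n) ∧
    Measure.map (fun ω => Z ω i i) volume = gaussianReal 0 ((2 : ℝ≥0) / n))

/-- The constant `c(σ)` from the paper. -/
def cconst (σ : ℝ) : ℝ := (1 / 384) * (1 - σ ^ 2) / (1 + 2 * σ * Real.sqrt (1 - σ ^ 2))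

/-- Frobenius norm of a real matrix. -/
def frobNorm {n : ℕ} (M : Matrix (Fin n) (Fin n) ℝ) : ℝ :=
  Real.sqrt (∑ i, ∑ j, (M i j) ^ 2)

/-- Set the diagonal of a matrix to zero. -/
def offdiag {n : ℕ} (M : Matrix (Fin n) (Fin n) ℝ) : Matrix (Fin n) (Fin n) ℝ :=
  fun i j => if i = j then 0 else M i j

section gaussAux
open Real

lemma integral_gaussianReal_fun {v : ℝ≥0} (hv : v ≠ 0) (g : ℝ → ℝ) :
    ∫ x, g x ∂(gaussianReal 0 v) = ∫ x, gaussianPDFReal 0 v x * g x := by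
  rw [gaussianReal_of_var_ne_zero _ hv]
  rw [show gaussianPDF 0 v = fun x => ((Real.toNNReal (gaussianPDFReal 0 v x) : ℝ≥0) : ℝ≥0∞)
    from rfl]
  rw [integral_withDensity_eq_integral_smul
    ((measurable_gaussianPDFReal 0 v).real_toNNReal) g]
  congr 1
  ext x
  rw [NNReal.smul_def, smul_eq_mul, Real.coe_toNNReal _ (gaussianPDFReal_nonneg _ _ _)]

lemma gaussianPDFReal_eq {v : ℝ≥0} (x : ℝ) :
    gaussianPDFReal 0 v x = (√(2 * π * v))⁻¹ * rexp (-(2 * (v:ℝ))⁻¹ * x ^ 2) := by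
  rw [gaussianPDFReal]
  congr 1
  rw [sub_zero]
  congr 1
  field_simp

lemma gauss_mean {v : ℝ≥0} : ∫ x, x ∂(gaussianReal 0 v) = 0 := by
  by_cases hv : v = 0
  · simp [hv, integral_dirac]
  rw [integral_gaussianReal_fun hv]
  set f : ℝ → ℝ := fun x => gaussianPDFReal 0 v x * x with hf
  have hodd : ∀ x, f (-x) = - f x := by
    intro x
    simp only [f, gaussianPDFReal, sub_zero, neg_sq, mul_neg, neg_neg]
  have h := integral_neg_eq_self f (volume : Measure ℝ)
  simp_rw [hodd, integral_neg] at h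
  linarith

lemma rpow_two' (x : ℝ) : x ^ (2 : ℝ) = x ^ (2 : ℕ) := by
  rw [show (2 : ℝ) = ((2 : ℕ) : ℝ) by norm_num, Real.rpow_natCast]

lemma gauss_integrable_poly_mul {v : ℝ≥0} (hv : v ≠ 0) (k : ℕ) :
    Integrable (fun x : ℝ => gaussianPDFReal 0 v x * x ^ k) := by
  have hb : (0:ℝ) < (2 * (v:ℝ))⁻¹ := by
    have : (0:ℝ) < (v:ℝ) := lt_of_le_of_ne (v.coe_nonneg) (by exact_mod_cast (Ne.symm hv))
    positivity
  have h := (integrable_rpow_mul_exp_neg_mul_sq hb (s := k)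
    (lt_of_lt_of_le (by norm_num) (Nat.cast_nonneg k) : (-1:ℝ) < (k:ℝ))).const_mul
      (√(2 * π * v))⁻¹
  refine h.congr ?_
  filter_upwards [] with x
  rw [gaussianPDFReal_eq, Real.rpow_natCast]
  ring

lemma gauss_integrable_pow {v : ℝ≥0} (k : ℕ) :
    Integrable (fun x : ℝ => x ^ k) (gaussianReal 0 v) := by
  by_cases hv : v = 0
  · rw [hv, gaussianReal_zero_var]
    exact (integrable_const ((0:ℝ) ^ k)).congr (ae_eq_dirac (fun x : ℝ => x ^ k)).symm
  rw [gaussianReal_of_var_ne_zero _ hv]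
  rw [show gaussianPDF 0 v = fun x => (ENNReal.ofReal (gaussianPDFReal 0 v x)) from rfl]
  rw [integrable_withDensity_iff (measurable_gaussianPDFReal 0 v).ennreal_ofReal
    (ae_of_all _ fun x => ENNReal.ofReal_lt_top)]
  refine (gauss_integrable_poly_mul hv k).congr ?_
  filter_upwards [] with x
  rw [ENNReal.toReal_ofReal (gaussianPDFReal_nonneg _ _ _)]
  ring

lemma gauss_snd_moment {v : ℝ≥0} : ∫ x, x ^ 2 ∂(gaussianReal 0 v) = v := by
  by_cases hv : v = 0
  · simp [hv, integral_dirac]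
  have hvpos : (0:ℝ) < (v:ℝ) := lt_of_le_of_ne (v.coe_nonneg)
    (by exact_mod_cast (Ne.symm hv))
  set b : ℝ := (2 * (v:ℝ))⁻¹ with hbdef
  have hb : (0:ℝ) < b := by positivity
  rw [integral_gaussianReal_fun hv]
  have h1 : ∫ x : ℝ, gaussianPDFReal 0 v x * x ^ 2
      = (√(2 * π * v))⁻¹ * ∫ x : ℝ, x ^ 2 * rexp (-b * x ^ 2) := by
    rw [← integral_const_mul]
    congr 1; ext x; rw [gaussianPDFReal_eq]; ring
  rw [h1]
  have h2 : ∫ x : ℝ, x ^ 2 * rexp (-b * x ^ 2)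
      = 2 * ∫ x in Set.Ioi (0:ℝ), x ^ 2 * rexp (-b * x ^ 2) := by
    rw [← integral_comp_abs (f := fun x => x ^ 2 * rexp (-b * x ^ 2))]
    congr 1; ext x; rw [sq_abs]
  have h3 : ∫ x in Set.Ioi (0:ℝ), x ^ 2 * rexp (-b * x ^ 2)
      = b ^ (-(3:ℝ)/2) * (1/2) * Real.Gamma ((3:ℝ)/2) := by
    have := integral_rpow_mul_exp_neg_mul_rpow (p := 2) (q := 2) (b := b)
      (by norm_num) (by norm_num) hb
    rw [show (-((2:ℝ)+1)/2) = (-(3:ℝ)/2) by norm_num,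
      show ((2:ℝ)+1)/2 = (3:ℝ)/2 by norm_num] at this
    rw [← this]
    refine setIntegral_congr_fun measurableSet_Ioi (fun x hx => ?_)
    rw [rpow_two']
  have hGamma : Real.Gamma ((3:ℝ)/2) = √π / 2 := by
    rw [show (3:ℝ)/2 = 1/2 + 1 by norm_num, Real.Gamma_add_one (by norm_num),
      Real.Gamma_one_half_eq]
    ring
  rw [h2, h3, hGamma]
  have hbval : b ^ (-(3:ℝ)/2) = (2 * (v:ℝ)) ^ ((3:ℝ)/2) := by
    rw [hbdef, ← Real.rpow_neg_one, ← Real.rpow_mul (by positivity)]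
    norm_num
  rw [hbval]
  have h32 : (2 * (v:ℝ)) ^ ((3:ℝ)/2) = (2 * (v:ℝ)) * √(2 * (v:ℝ)) := by
    rw [show (3:ℝ)/2 = 1 + 1/2 by norm_num, Real.rpow_add (by positivity),
      Real.rpow_one, ← Real.sqrt_eq_rpow]
  rw [h32]
  have hsq : √(2 * π * (v:ℝ)) = √(2 * (v:ℝ)) * √π := by
    rw [← Real.sqrt_mul (by positivity)]
    ring_nf
  rw [hsq]
  have hπ : (0:ℝ) < √π := Real.sqrt_pos.mpr Real.pi_pos
  have h2v : (0:ℝ) < √(2 * (v:ℝ)) := Real.sqrt_pos.mpr (by positivity)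
  field_simp

end gaussAux

/-- Variance profile of a GOE Wigner matrix. -/
def entryVar (n : ℕ) {m : ℕ} (i j : Fin m) : ℝ≥0 := if i = j then 2/n else 1/n

/-- The ordered representative of the unordered pair `{i,j}`. -/
def sympair {n : ℕ} (i j : Fin n) : {q : Fin n × Fin n // q.1 ≤ q.2} :=
  if h : i ≤ j then ⟨(i, j), h⟩ else ⟨(j, i), le_of_not_ge h⟩

lemma sympair_eq {n : ℕ} {i j k l : Fin n} (h : sympair i j = sympair k l) :
    (i = k ∧ j = l) ∨ (i = l ∧ j = k) := by
  unfold sympair at h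
  split_ifs at h <;> simp only [Subtype.mk.injEq, Prod.mk.injEq] at h <;> tauto

/-- For a GOE Wigner matrix `A`, a permutation matrix `X` (of permutation `x`)
and `C := A X A`: `E[C i i] = s_x + (1/n)·1_{i ∈ S_X}` and, for `i ≠ j`,
`E[C i j] = (1/n)·1_{x j = i}`; consequently
`s_x − 1/n ≤ E[C i i] − E[C i j] ≤ s_x + 1/n` for all `i ≠ j`. -/
theorem stmt2 {Ω : Type*} [MeasureSpace Ω] [IsProbabilityMeasure (volume : Measure Ω)]
    {n : ℕ} (hn : 0 < n)
    (A : Ω → Matrix (Fin n) (Fin n) ℝ) (hA : IsWigner n A)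
    (x : Equiv.Perm (Fin n))
    (C : Ω → Matrix (Fin n) (Fin n) ℝ)
    (hC : ∀ ω, C ω = matProd3 (A ω) (permMat x) (A ω))
    (sx : ℝ) (hsx : sx = ((fixedPts x).card : ℝ) / n) :
    (∀ i : Fin n,
      (∫ ω, C ω i i ∂volume) = sx + (if x i = i then (1 : ℝ) / n else 0)) ∧
    (∀ i j : Fin n, i ≠ j →
      (∫ ω, C ω i j ∂volume) = (if x j = i then (1 : ℝ) / n else 0)) ∧
    (∀ i j : Fin n, i ≠ j →
      sx - 1 / n ≤ (∫ ω, C ω i i ∂volume) - (∫ ω, C ω i j ∂volume) ∧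
      (∫ ω, C ω i i ∂volume) - (∫ ω, C ω i j ∂volume) ≤ sx + 1 / n) := by
  obtain ⟨hsym, hmeas, hindep, hoff, hdiag⟩ := hA
  -- law of each entry
  have hmap : ∀ i j, Measure.map (fun ω => A ω i j) volume = gaussianReal 0 (entryVar n i j) := by
    intro i j
    rcases lt_trichotomy i j with h | h | h
    · rw [hoff i j h]
      congr 1
      rw [entryVar, if_neg (ne_of_lt h)]
    · subst h
      rw [hdiag i]
      congr 1
      rw [entryVar, if_pos rfl]
    · have he : (fun ω => A ω i j) = fun ω => A ω j i := funext fun ω => hsym ω i j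
      rw [he, hoff j i h]
      congr 1
      rw [entryVar, if_neg (ne_of_gt h)]
  -- L² membership
  have hL2 : ∀ i j, MemLp (fun ω => A ω i j) 2 volume := by
    intro i j
    have h1 : MemLp (id : ℝ → ℝ) 2 (gaussianReal 0 (entryVar n i j)) :=
      (memLp_two_iff_integrable_sq aestronglyMeasurable_id).2
        (by simpa using gauss_integrable_pow (v := entryVar n i j) 2)
    rw [← hmap i j] at h1
    exact (memLp_map_measure_iff aestronglyMeasurable_id (hmeas i j).aemeasurable).1 h1
  -- mean and second moment of entries
  have hmean : ∀ i j, ∫ ω, A ω i j ∂volume = 0 := by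
    intro i j
    have h1 : ∫ y, y ∂(Measure.map (fun ω => A ω i j) volume) = ∫ ω, A ω i j ∂volume :=
      integral_map (hmeas i j).aemeasurable aestronglyMeasurable_id
    rw [← h1, hmap i j, gauss_mean]
  have hsq : ∀ i j, ∫ ω, (A ω i j) ^ 2 ∂volume = (entryVar n i j : ℝ) := by
    intro i j
    have h1 : ∫ y, y ^ 2 ∂(Measure.map (fun ω => A ω i j) volume)
        = ∫ ω, (A ω i j) ^ 2 ∂volume :=
      integral_map (hmeas i j).aemeasurable
        ((measurable_id.pow_const 2).aestronglyMeasurable)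
    rw [← h1, hmap i j, gauss_snd_moment]
  -- integrability of products of entries
  have hintmul : ∀ i j k l, Integrable (fun ω => A ω i j * A ω k l) volume := by
    intro i j k l
    have hpqr : (1:ℝ≥0∞)/1 = 1/2 + 1/2 := by
      simp only [one_div, inv_one]
      exact ENNReal.inv_two_add_inv_two.symm
    have := ((hL2 k l).smul (hL2 i j) (r := 1))
    rw [← memLp_one_iff_integrable]
    exact this
  -- covariance structure
  have hcov : ∀ a b c d : Fin n, ∫ ω, A ω a b * A ω c d ∂volume =
      if (a = c ∧ b = d) ∨ (a = d ∧ b = c) then (entryVar n a b : ℝ) else 0 := by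
    intro a b c d
    split_ifs with h
    · rcases h with ⟨h1, h2⟩ | ⟨h1, h2⟩
      · subst h1; subst h2
        rw [show (fun ω => A ω a b * A ω a b) = fun ω => (A ω a b) ^ 2 from
          funext fun ω => (sq (A ω a b)).symm]
        exact hsq a b
      · subst h1; subst h2
        rw [show (fun ω => A ω a b * A ω b a) = fun ω => (A ω a b) ^ 2 from
          funext fun ω => by rw [hsym ω b a, sq]]
        exact hsq a b
    · have hne : sympair a b ≠ sympair c d := fun hh => h (sympair_eq hh)
      have hi : IndepFun (fun ω => A ω a b) (fun ω => A ω c d) volume := by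
        have h2 := hindep.indepFun hne
        have e1 : (fun ω => A ω (sympair a b).1.1 (sympair a b).1.2) = fun ω => A ω a b := by
          funext ω; unfold sympair; split_ifs with hh
          · rfl
          · exact hsym ω b a
        have e2 : (fun ω => A ω (sympair c d).1.1 (sympair c d).1.2) = fun ω => A ω c d := by
          funext ω; unfold sympair; split_ifs with hh
          · rfl
          · exact hsym ω d c
        rwa [e1, e2] at h2
      have hm := hi.integral_mul_eq_mul_integral (hmeas a b).aestronglyMeasurable
        (hmeas c d).aestronglyMeasurable
      have : ∫ ω, A ω a b * A ω c d ∂volume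
          = (∫ ω, A ω a b ∂volume) * ∫ ω, A ω c d ∂volume := hm
      rw [this, hmean, hmean, mul_zero]
  -- entries of C
  have hCentry : ∀ ω (i j : Fin n), C ω i j = ∑ k, A ω i k * A ω (x k) j := by
    intro ω i j
    rw [hC]
    unfold matProd3 permMat
    refine Finset.sum_congr rfl fun k _ => ?_
    have : ∀ l, A ω i k * (if x k = l then (1:ℝ) else 0) * A ω l j
        = if x k = l then A ω i k * A ω l j else 0 := by
      intro l; by_cases h : x k = l <;> simp [h]
    simp_rw [this]
    rw [Finset.sum_ite_eq, if_pos (Finset.mem_univ _)]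
  have hICij : ∀ i j : Fin n, ∫ ω, C ω i j ∂volume =
      ∑ k, (if (i = x k ∧ k = j) ∨ (i = j ∧ k = x k) then (entryVar n i k : ℝ) else 0) := by
    intro i j
    have h1 : ∫ ω, C ω i j ∂volume = ∫ ω, ∑ k, A ω i k * A ω (x k) j ∂volume := by
      simp_rw [hCentry]
    rw [h1, integral_finset_sum _ (fun k _ => hintmul i k (x k) j)]
    exact Finset.sum_congr rfl fun k _ => hcov i k (x k) j
  have hnR : (0:ℝ) < n := by exact_mod_cast hn
  -- Part 1
  have part1 : ∀ i : Fin n,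
      (∫ ω, C ω i i ∂volume) = sx + (if x i = i then (1 : ℝ) / n else 0) := by
    intro i
    rw [hICij i i]
    have hterm : ∀ k : Fin n,
        (if (i = x k ∧ k = i) ∨ (i = i ∧ k = x k) then (entryVar n i k : ℝ) else 0)
        = if x k = k then (entryVar n i k : ℝ) else 0 := by
      intro k
      by_cases h : x k = k
      · rw [if_pos h, if_pos (Or.inr ⟨rfl, h.symm⟩)]
      · rw [if_neg h, if_neg]
        rintro (⟨h1, h2⟩ | ⟨h1, h2⟩)
        · subst h2; exact h h1.symm
        · exact h h2.symm
    rw [Finset.sum_congr rfl fun k _ => hterm k]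
    rw [← Finset.sum_filter]
    have hfix : Finset.univ.filter (fun k => x k = k) = fixedPts x := rfl
    rw [hfix]
    have hsplit : ∀ k ∈ fixedPts x,
        (entryVar n i k : ℝ) = 1/n + (if i = k then (1:ℝ)/n else 0) := by
      intro k _
      rw [entryVar]
      by_cases h : i = k
      · rw [if_pos h, if_pos h]
        push_cast
        ring
      · rw [if_neg h, if_neg h]
        push_cast
        ring
    rw [Finset.sum_congr rfl hsplit, Finset.sum_add_distrib, Finset.sum_const,
      Finset.sum_ite_eq]
    have hmem : i ∈ fixedPts x ↔ x i = i := by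
      simp [fixedPts]
    simp only [hmem]
    rw [hsx, nsmul_eq_mul]
    ring
  -- Part 2
  have part2 : ∀ i j : Fin n, i ≠ j →
      (∫ ω, C ω i j ∂volume) = (if x j = i then (1 : ℝ) / n else 0) := by
    intro i j hij
    rw [hICij i j]
    have hν : (entryVar n i j : ℝ) = 1/n := by
      rw [entryVar, if_neg hij]
      push_cast
      ring
    have hterm : ∀ k : Fin n,
        (if (i = x k ∧ k = j) ∨ (i = j ∧ k = x k) then (entryVar n i k : ℝ) else 0)
        = if j = k then (if x j = i then (1:ℝ)/n else 0) else 0 := by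
      intro k
      by_cases hk : k = j
      · subst hk
        by_cases h2 : x k = i
        · rw [if_pos (Or.inl ⟨h2.symm, rfl⟩), if_pos rfl, if_pos h2, hν]
        · rw [if_neg, if_pos rfl, if_neg h2]
          rintro (⟨h1, _⟩ | ⟨h1, _⟩)
          · exact h2 h1.symm
          · exact hij h1
      · rw [if_neg, if_neg (fun h => hk h.symm)]
        rintro (⟨h1, h2⟩ | ⟨h1, h2⟩)
        · exact hk h2
        · exact hij h1
    rw [Finset.sum_congr rfl fun k _ => hterm k]
    rw [Finset.sum_ite_eq, if_pos (Finset.mem_univ _)]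
  refine ⟨part1, part2, fun i j hij => ?_⟩
  rw [part1 i, part2 i j hij]
  have h0 : (0:ℝ) ≤ 1/n := by positivity
  constructor <;> split_ifs <;> linarith

end
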